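/- Let ℋ = {(x_1, x_2) ∈ ℝ² : x_1(x_1² - x_2²) = 1, x_1 > 0} with h(x) = x_1³ - x_1x_2². On the portion of ℋ parametrized by x_1 > 1 with x_2 = √(x_1² - 1/x_1), the pullback of -∂²h equals g_ℋ = (6/x_1²)·((1 - 1/(4x_1³))/(1 - 1/x_1³)) dx_1². In particular, g_ℋ is positive definite there and the arc-length satisfies s ~ √6 log(x_1) as x_1 → ∞, i.e., the ratio of the arc length from 1+ε to x_1 and √6 log x_1 tends to 1. -/

import Mathlib

open Filter

noncomputable section

/-- the second coordinate `x₂ = √(x₁² - 1/x₁)` on the inhomogeneous complete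
PSR curve `ℋ = {x₁(x₁² - x₂²) = 1, x₁ > 0}`. -/
def x₂fun : ℝ → ℝ := fun x => Real.sqrt (x^2 - 1/x)

/-- the pullback of `-∂²h`, `h = x₁³ - x₁x₂²`, along the parametrization
`x₁ ↦ (x₁, x₂(x₁))` (Hessian entries: `h₁₁ = 6x₁`, `h₁₂ = -2x₂`,
`h₂₂ = -2x₁`). -/
def gH : ℝ → ℝ := fun x =>
  -(6 * x + 2 * (-2 * x₂fun x) * deriv x₂fun x
    + (-2 * x) * (deriv x₂fun x)^2)

lemma sub_pos_of_gt_one {x : ℝ} (hx : 1 < x) : 0 < x^2 - 1/x := by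
  have hx0 : 0 < x := lt_trans one_pos hx
  rw [sub_pos, div_lt_iff₀ hx0]
  nlinarith

lemma hasDerivAt_x₂ {x : ℝ} (hx : 1 < x) :
    HasDerivAt x₂fun ((2*x + 1/x^2) / (2 * Real.sqrt (x^2 - 1/x))) x := by
  have hx0 : 0 < x := lt_trans one_pos hx
  have h1 : HasDerivAt (fun y : ℝ => y^2 - 1/y) (2*x + 1/x^2) x := by
    have h2 : HasDerivAt (fun y : ℝ => y^2) (2*x) x := by
      simpa using hasDerivAt_pow 2 x
    have h3 : HasDerivAt (fun y : ℝ => 1/y) (-(x^2)⁻¹) x := by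
      simpa [one_div] using hasDerivAt_inv (ne_of_gt hx0)
    refine (h2.sub h3).congr_deriv ?_
    rw [one_div]; ring
  exact h1.sqrt (ne_of_gt (sub_pos_of_gt_one hx))

lemma gH_eq {x : ℝ} (hx : 1 < x) :
    gH x = 6 / x^2 * ((1 - 1/(4*x^3)) / (1 - 1/x^3)) := by
  have hx0 : 0 < x := lt_trans one_pos hx
  have hp := sub_pos_of_gt_one hx
  have hd : deriv x₂fun x = (2*x + 1/x^2) / (2 * Real.sqrt (x^2 - 1/x)) :=
    (hasDerivAt_x₂ hx).deriv
  have hs0 : 0 < Real.sqrt (x^2 - 1/x) := Real.sqrt_pos.mpr hp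
  have hs2 : Real.sqrt (x^2 - 1/x) ^ 2 = x^2 - 1/x := Real.sq_sqrt hp.le
  have hx3 : (0:ℝ) < 1 - 1/x^3 := by
    rw [sub_pos, div_lt_one (by positivity)]
    exact lt_of_lt_of_le (one_lt_pow₀ hx (by norm_num)) (le_refl _)
  show -(6 * x + 2 * (-2 * x₂fun x) * deriv x₂fun x + (-2 * x) * (deriv x₂fun x)^2) = _
  rw [hd]
  show -(6 * x + 2 * (-2 * Real.sqrt (x^2 - 1/x)) * _ + _) = _
  set s := Real.sqrt (x^2 - 1/x) with hsdef
  have e2 : 2 * (-2 * s) * ((2*x + 1/x^2) / (2*s)) = -2*(2*x + 1/x^2) := by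
    field_simp
  have e3 : (-2*x) * ((2*x + 1/x^2) / (2*s))^2
      = (-2*x) * (2*x+1/x^2)^2 / (4*(x^2 - 1/x)) := by
    have h4 : (2*s)^2 = 4*(x^2-1/x) := by rw [mul_pow, hs2]; ring
    rw [div_pow, h4]; ring
  rw [e2, e3]
  have h5 : x^3 - 1 ≠ 0 := by nlinarith [one_lt_pow₀ hx (three_ne_zero)]
  have r1 : x^2 - 1/x = (x^3-1)/x := by field_simp
  have r2 : (1:ℝ) - 1/x^3 = (x^3-1)/x^3 := by field_simp
  have r3 : (1:ℝ) - 1/(4*x^3) = (4*x^3-1)/(4*x^3) := by field_simp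
  rw [r1, r2, r3]
  field_simp
  ring

lemma gH_pos {x : ℝ} (hx : 1 < x) : 0 < gH x := by
  have hx0 : 0 < x := lt_trans one_pos hx
  rw [gH_eq hx]
  have hx3 : 1 < x^3 := one_lt_pow₀ hx (by norm_num)
  have h1 : (0:ℝ) < 1 - 1/x^3 := by
    rw [sub_pos, div_lt_one (by positivity)]; linarith
  have h2 : (0:ℝ) < 1 - 1/(4*x^3) := by
    rw [sub_pos, div_lt_one (by positivity)]; linarith
  have h3 : (0:ℝ) < 6 / x^2 := by positivity
  exact mul_pos h3 (div_pos h2 h1)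

lemma aux_pos {u : ℝ} (hu : 1 < u) : (0:ℝ) < 1 - 1/u^3 := by
  have h3 : 1 < u^3 := one_lt_pow₀ hu three_ne_zero
  rw [sub_pos, div_lt_one (by positivity)]; exact h3

lemma sqrt_gH_lower {u : ℝ} (hu : 1 < u) : Real.sqrt 6 / u ≤ Real.sqrt (gH u) := by
  have hu0 : 0 < u := lt_trans one_pos hu
  have hd : 0 < 1 - 1/u^3 := aux_pos hu
  have hr : 1 ≤ (1 - 1/(4*u^3)) / (1 - 1/u^3) := by
    rw [le_div_iff₀ hd, one_mul]
    have : 1/(4*u^3) ≤ 1/u^3 := by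
      apply div_le_div_of_nonneg_left one_pos.le (by positivity)
      nlinarith [pow_pos hu0 3]
    linarith
  have hglow : (Real.sqrt 6 / u)^2 ≤ gH u := by
    rw [gH_eq hu]
    have : (Real.sqrt 6 / u)^2 = 6/u^2 := by
      rw [div_pow, Real.sq_sqrt (by norm_num)]
    rw [this]
    exact le_mul_of_one_le_right (by positivity) hr
  have := Real.sqrt_le_sqrt hglow
  rwa [Real.sqrt_sq (by positivity)] at this

lemma sqrt_gH_upper {a u : ℝ} (ha : 1 < a) (hu : a ≤ u) :
    Real.sqrt (gH u) ≤ Real.sqrt 6 / u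
      + (Real.sqrt 6 * (3*a^3/(4*(a^3-1)))) / u^4 := by
  have hu1 : 1 < u := lt_of_lt_of_le ha hu
  have hu0 : 0 < u := lt_trans one_pos hu1
  have ha0 : 0 < a := lt_trans one_pos ha
  have hb : 1 < a^3 := one_lt_pow₀ ha three_ne_zero
  have ht : 1 < u^3 := one_lt_pow₀ hu1 three_ne_zero
  have hbt : a^3 ≤ u^3 := pow_le_pow_left₀ ha0.le hu 3
  set K : ℝ := 3*a^3/(4*(a^3-1)) with hK
  have hK0 : 0 < K := by
    apply div_pos (by positivity); nlinarith
  have hd : 0 < 1 - 1/u^3 := aux_pos hu1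
  -- r - 1 = 3/(4(u³-1))
  have hsub : (1 - 1/(4*u^3)) / (1 - 1/u^3) - 1 = 3/(4*(u^3-1)) := by
    have h1 : u^3 - 1 ≠ 0 := by nlinarith
    field_simp
    ring
  have hKd : 3/(4*(u^3-1)) ≤ K/u^3 := by
    rw [hK, div_div]
    have h48 : (0:ℝ) < 4*(a^3-1)*u^3 := by
      have : (0:ℝ) < 4*(a^3-1) := by nlinarith
      exact mul_pos this (pow_pos hu0 3)
    rw [div_le_div_iff₀ (by nlinarith) h48]
    nlinarith [hbt]
  have hrle : (1 - 1/(4*u^3)) / (1 - 1/u^3) ≤ 1 + K/u^3 := by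
    have := hsub.le.trans hKd
    linarith
  have hgle : gH u ≤ (Real.sqrt 6/u + Real.sqrt 6*K/u^4)^2 := by
    rw [gH_eq hu1]
    have h6 : Real.sqrt 6 ^ 2 = 6 := Real.sq_sqrt (by norm_num)
    have expand : (Real.sqrt 6/u + Real.sqrt 6*K/u^4)^2 = 6/u^2 * (1 + K/u^3)^2 := by
      have : (Real.sqrt 6/u + Real.sqrt 6*K/u^4)^2
          = Real.sqrt 6^2 * (1/u + K/u^4)^2 := by ring
      rw [this, h6]
      field_simp
    rw [expand]
    apply mul_le_mul_of_nonneg_left _ (by positivity)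
    calc (1 - 1/(4*u^3)) / (1 - 1/u^3) ≤ 1 + K/u^3 := hrle
      _ ≤ (1 + K/u^3)^2 := by nlinarith [div_nonneg hK0.le (pow_nonneg hu0.le 3)]
  have := Real.sqrt_le_sqrt hgle
  rwa [Real.sqrt_sq (by positivity)] at this

lemma contOn_sqrt_gH {a : ℝ} (ha : 1 < a) :
    ContinuousOn (fun u => Real.sqrt (gH u)) (Set.Ici a) := by
  have hne : ∀ u ∈ Set.Ici a, u ≠ 0 := fun u hu =>
    ne_of_gt (lt_trans one_pos (lt_of_lt_of_le ha hu))
  have hF : ContinuousOn (fun u : ℝ => 6/u^2 * ((1-1/(4*u^3))/(1-1/u^3)))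
      (Set.Ici a) := by
    apply ContinuousOn.mul
    · exact continuousOn_const.div (by fun_prop)
        (fun u hu => pow_ne_zero _ (hne u hu))
    · apply ContinuousOn.div
      · exact continuousOn_const.sub (continuousOn_const.div (by fun_prop)
          (fun u hu => by
            have := hne u hu
            positivity))
      · exact continuousOn_const.sub (continuousOn_const.div (by fun_prop)
          (fun u hu => pow_ne_zero _ (hne u hu)))
      · exact fun u hu => ne_of_gt (aux_pos (lt_of_lt_of_le ha hu))
  exact ContinuousOn.sqrt (hF.congr fun u hu => gH_eq (lt_of_lt_of_le ha hu))

lemma integral_bounds {a x : ℝ} (ha : 1 < a) (hax : a ≤ x) :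
    Real.sqrt 6 * (Real.log x - Real.log a) ≤ (∫ u in a..x, Real.sqrt (gH u)) ∧
    (∫ u in a..x, Real.sqrt (gH u)) ≤ Real.sqrt 6 * (Real.log x - Real.log a)
      + (Real.sqrt 6 * (3*a^3/(4*(a^3-1)))) / (3*a^3) := by
  have ha0 : 0 < a := lt_trans one_pos ha
  have hx0 : 0 < x := lt_of_lt_of_le ha0 hax
  set C : ℝ := Real.sqrt 6 * (3*a^3/(4*(a^3-1))) with hC
  have h0 : (0:ℝ) ∉ Set.uIcc a x := by
    rw [Set.uIcc_of_le hax]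
    rintro ⟨h1, -⟩
    exact absurd h1 (not_le.mpr ha0)
  have hssub : Set.uIcc a x ⊆ Set.Ici a := by
    rw [Set.uIcc_of_le hax]; exact fun u hu => hu.1
  have hne : ∀ u ∈ Set.uIcc a x, u ≠ 0 := fun u hu =>
    ne_of_gt (lt_of_lt_of_le ha0 (hssub hu))
  -- integrability
  have hint : IntervalIntegrable (fun u => Real.sqrt (gH u)) MeasureTheory.volume a x :=
    ((contOn_sqrt_gH ha).mono hssub).intervalIntegrable
  have hintL : IntervalIntegrable (fun u => Real.sqrt 6 / u) MeasureTheory.volume a x :=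
    (continuousOn_const.div continuousOn_id hne).intervalIntegrable
  have hintU : IntervalIntegrable (fun u => Real.sqrt 6 / u + C/u^4)
      MeasureTheory.volume a x := by
    apply IntervalIntegrable.add
    · exact (continuousOn_const.div continuousOn_id hne).intervalIntegrable
    · exact (continuousOn_const.div (by fun_prop)
        (fun u hu => pow_ne_zero _ (hne u hu))).intervalIntegrable
  -- value of ∫ √6/u
  have hLval : (∫ u in a..x, Real.sqrt 6 / u)
      = Real.sqrt 6 * (Real.log x - Real.log a) := by
    calc (∫ u in a..x, Real.sqrt 6 / u)
        = ∫ u in a..x, Real.sqrt 6 * u⁻¹ := by simp only [div_eq_mul_inv]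
      _ = Real.sqrt 6 * ∫ u in a..x, u⁻¹ :=
          intervalIntegral.integral_const_mul _ _
      _ = Real.sqrt 6 * (Real.log x - Real.log a) := by
          rw [integral_inv h0, Real.log_div hx0.ne' ha0.ne']
  -- value and bound for ∫ C/u^4
  have hUval : (∫ u in a..x, C / u^4) ≤ C / (3*a^3) := by
    have h1 : (∫ u in a..x, C / u^4)
        = C * ∫ u in a..x, (u:ℝ)^(-4:ℤ) := by
      rw [← intervalIntegral.integral_const_mul]
      apply intervalIntegral.integral_congr
      intro u hu
      show C / u^4 = C * u^(-4:ℤ)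
      rw [zpow_neg, div_eq_mul_inv]
      norm_num [zpow_ofNat]
    have hC0 : 0 ≤ C := by
      rw [hC]
      apply mul_nonneg (Real.sqrt_nonneg 6)
      apply div_nonneg (by positivity)
      nlinarith [one_lt_pow₀ ha three_ne_zero]
    have hxz : x ^ (-4 + 1 : ℤ) = (x^3)⁻¹ := by norm_num [zpow_neg, zpow_ofNat]
    have haz : a ^ (-4 + 1 : ℤ) = (a^3)⁻¹ := by norm_num [zpow_neg, zpow_ofNat]
    rw [h1, integral_zpow (Or.inr ⟨by norm_num, h0⟩), hxz, haz]
    rw [show ((((-4:ℤ)):ℝ) + 1) = -3 by norm_num]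
    have key : ((x ^ 3)⁻¹ - (a ^ 3)⁻¹) / (-3 : ℝ) ≤ 1/(3*a^3) := by
      have h4 : (0:ℝ) ≤ (x^3)⁻¹ := by positivity
      have h5 : ((x ^ 3)⁻¹ - (a ^ 3)⁻¹) / (-3:ℝ) = ((a^3)⁻¹ - (x^3)⁻¹)/3 := by
        ring
      have h6 : 1/(3*a^3) = (a^3)⁻¹/3 := by field_simp
      rw [h5, h6]
      linarith
    calc C * (((x^3)⁻¹ - (a^3)⁻¹) / (-3:ℝ)) ≤ C * (1/(3*a^3)) :=
          mul_le_mul_of_nonneg_left key hC0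
      _ = C/(3*a^3) := mul_one_div _ _
  -- combine with monotonicity
  constructor
  · rw [← hLval]
    apply intervalIntegral.integral_mono_on hax hintL hint
    intro u hu
    exact sqrt_gH_lower (lt_of_lt_of_le ha hu.1)
  · have hmono : (∫ u in a..x, Real.sqrt (gH u))
        ≤ ∫ u in a..x, (Real.sqrt 6 / u + C/u^4) := by
      apply intervalIntegral.integral_mono_on hax hint hintU
      intro u hu
      exact sqrt_gH_upper ha hu.1
    have hsplit : (∫ u in a..x, (Real.sqrt 6 / u + C/u^4))
        = (∫ u in a..x, Real.sqrt 6 / u) + ∫ u in a..x, C/u^4 := by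
      apply intervalIntegral.integral_add
      · exact (continuousOn_const.div continuousOn_id hne).intervalIntegrable
      · exact (continuousOn_const.div (by fun_prop)
          (fun u hu => pow_ne_zero _ (hne u hu))).intervalIntegrable
    calc (∫ u in a..x, Real.sqrt (gH u))
        ≤ (∫ u in a..x, Real.sqrt 6 / u) + ∫ u in a..x, C/u^4 := by
          rw [← hsplit]; exact hmono
      _ ≤ Real.sqrt 6 * (Real.log x - Real.log a) + C/(3*a^3) := by
          rw [hLval]; linarith [hUval]

lemma tendsto_part (ε : ℝ) (hε : 0 < ε) :
    Tendsto (fun x : ℝ =>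
        (∫ u in (1+ε)..x, Real.sqrt (gH u)) / (Real.sqrt 6 * Real.log x))
      atTop (nhds 1) := by
  set a : ℝ := 1 + ε with ha_def
  have ha : 1 < a := by simp [ha_def]; linarith
  set B : ℝ := (Real.sqrt 6 * (3*a^3/(4*(a^3-1)))) / (3*a^3) with hB
  have h6 : (0:ℝ) < Real.sqrt 6 := Real.sqrt_pos.mpr (by norm_num)
  have hloginv : Tendsto (fun x : ℝ => (Real.log x)⁻¹) atTop (nhds 0) :=
    tendsto_inv_atTop_zero.comp Real.tendsto_log_atTop
  have h1 : Tendsto (fun x : ℝ => 1 - Real.log a * (Real.log x)⁻¹)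
      atTop (nhds 1) := by
    have h0 : Tendsto (fun _ : ℝ => (1:ℝ)) atTop (nhds 1) := tendsto_const_nhds
    simpa using h0.sub (hloginv.const_mul (Real.log a))
  have h2 : Tendsto (fun x : ℝ =>
      1 - Real.log a * (Real.log x)⁻¹ + B/Real.sqrt 6 * (Real.log x)⁻¹)
      atTop (nhds 1) := by
    have := h1.add (hloginv.const_mul (B/Real.sqrt 6))
    simpa using this
  refine tendsto_of_tendsto_of_tendsto_of_le_of_le' h1 h2 ?_ ?_
  · filter_upwards [eventually_ge_atTop (max a 2)] with x hx
    have hxa : a ≤ x := le_trans (le_max_left _ _) hx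
    have hx2 : (2:ℝ) ≤ x := le_trans (le_max_right _ _) hx
    have hlx : 0 < Real.log x := Real.log_pos (by linarith)
    have hd : 0 < Real.sqrt 6 * Real.log x := mul_pos h6 hlx
    have heq : (1 - Real.log a * (Real.log x)⁻¹)
        = (Real.sqrt 6 * (Real.log x - Real.log a)) / (Real.sqrt 6 * Real.log x) := by
      field_simp
    rw [heq]
    exact (div_le_div_iff_of_pos_right hd).mpr (integral_bounds ha hxa).1
  · filter_upwards [eventually_ge_atTop (max a 2)] with x hx
    have hxa : a ≤ x := le_trans (le_max_left _ _) hx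
    have hx2 : (2:ℝ) ≤ x := le_trans (le_max_right _ _) hx
    have hlx : 0 < Real.log x := Real.log_pos (by linarith)
    have hd : 0 < Real.sqrt 6 * Real.log x := mul_pos h6 hlx
    have heq : (1 - Real.log a * (Real.log x)⁻¹ + B/Real.sqrt 6 * (Real.log x)⁻¹)
        = (Real.sqrt 6 * (Real.log x - Real.log a) + B) / (Real.sqrt 6 * Real.log x) := by
      field_simp
    rw [heq]
    exact (div_le_div_iff_of_pos_right hd).mpr (integral_bounds ha hxa).2

/-- on the inhomogeneous complete PSR curve the induced metric is
`(6/x₁²)·((1 - 1/(4x₁³))/(1 - 1/x₁³)) dx₁²`, positive definite for `x₁ > 1`,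
and the arc length from `1+ε` is asymptotic to `√6 log x₁` as `x₁ → ∞`. -/
theorem stmt_14 :
    (∀ x : ℝ, 1 < x →
      gH x = 6 / x^2 * ((1 - 1/(4*x^3)) / (1 - 1/x^3)) ∧ 0 < gH x) ∧
    (∀ ε : ℝ, 0 < ε →
      Tendsto
        (fun x : ℝ =>
          (∫ u in (1+ε)..x, Real.sqrt (gH u)) / (Real.sqrt 6 * Real.log x))
        atTop (nhds 1)) :=
  ⟨fun _ hx => ⟨gH_eq hx, gH_pos hx⟩, tendsto_part⟩

end
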